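/- Let λ_D > 0. As t → ∞, ∫₀^∞ (1/x) exp(-π²t/(2x²) - λ_D x) dx is asymptotic to C₀ t^{-1/6} exp(-(3/2)π^{2/3}λ_D^{2/3}t^{1/3}) for some constant C₀ > 0. -/

import Mathlib

open MeasureTheory Real Filter Set

noncomputable section

lemma sqrt_tendsto_atTop : Tendsto Real.sqrt atTop atTop := by
  have : Real.sqrt = fun x : ℝ => x ^ ((1:ℝ)/2) := funext fun x => Real.sqrt_eq_rpow x
  rw [this]; exact tendsto_rpow_atTop (by norm_num)

lemma phi_shift (τ u : ℝ) (hu : u ≠ 0) :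
    3*τ/2 - τ*(1/(2*u^2) + u) = -(τ*(u-1)^2*(2*u+1)/(2*u^2)) := by
  field_simp; ring

lemma integral_Ioi_add (f : ℝ → ℝ) (a c : ℝ) :
    ∫ x in Ioi a, f (x + c) = ∫ x in Ioi (a + c), f x := by
  rw [← integral_indicator measurableSet_Ioi, ← integral_indicator measurableSet_Ioi,
    ← integral_add_right_eq_self (fun x => indicator (Ioi (a+c)) f x) c]
  congr 1; funext x
  by_cases h : a < x
  · rw [indicator_of_mem (mem_Ioi.2 h), indicator_of_mem (mem_Ioi.2 (by linarith))]
  · rw [indicator_of_notMem (by simpa using h),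
      indicator_of_notMem (by simp only [mem_Ioi]; intro hc; exact h (by linarith))]

def lapf (τ u : ℝ) : ℝ := (1/u) * Real.exp (3*τ/2 - τ*(1/(2*u^2) + u))

def lapG (τ : ℝ) : ℝ := ∫ u in Ioi (0:ℝ), (1/u) * Real.exp (-(τ * (1/(2*u^2) + u)))

lemma lapG_eq {τ : ℝ} (h : 0 < τ) :
    Real.sqrt τ * Real.exp (3*τ/2) * lapG τ
      = ∫ w, indicator (Ioi (-Real.sqrt τ)) (fun w => lapf τ (1 + w / Real.sqrt τ)) w := by
  have hs : 0 < Real.sqrt τ := Real.sqrt_pos.2 h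
  rw [integral_indicator measurableSet_Ioi]
  have h1 : Real.exp (3*τ/2) * lapG τ = ∫ u in Ioi (0:ℝ), lapf τ u := by
    rw [lapG, ← integral_const_mul]
    congr 1; funext u
    rw [lapf, mul_left_comm, ← Real.exp_add]
    ring_nf
  have h2 : ∫ w in Ioi (-Real.sqrt τ), lapf τ (1 + w / Real.sqrt τ)
      = Real.sqrt τ * ∫ u in Ioi (0:ℝ), lapf τ u := by
    have key := integral_comp_mul_left_Ioi (fun y => lapf τ (1+y)) (-Real.sqrt τ)
      (inv_pos.2 hs)
    simp only [smul_eq_mul, inv_inv] at key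
    have e1 : (Real.sqrt τ)⁻¹ * (-Real.sqrt τ) = -1 := by field_simp
    rw [e1] at key
    have e2 : ∀ w : ℝ, 1 + w / Real.sqrt τ = 1 + (Real.sqrt τ)⁻¹ * w := fun w => by
      rw [div_eq_inv_mul]
    calc ∫ w in Ioi (-Real.sqrt τ), lapf τ (1 + w / Real.sqrt τ)
        = ∫ w in Ioi (-Real.sqrt τ), lapf τ (1 + (Real.sqrt τ)⁻¹ * w) := by
          simp_rw [e2]
      _ = Real.sqrt τ * ∫ y in Ioi (-1:ℝ), lapf τ (1 + y) := key
      _ = Real.sqrt τ * ∫ u in Ioi (0:ℝ), lapf τ u := by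
          congr 1
          have := integral_Ioi_add (lapf τ) (-1) 1
          simp only [neg_add_cancel] at this
          rw [← this]; simp_rw [add_comm]
  rw [mul_assoc, h1, h2]

def lapBound (w : ℝ) : ℝ := 4 * Real.exp (-w^2/4) + 2 * Real.exp (-|w|/4)

lemma lapBound_integrable : Integrable lapBound := by
  have g1 : Integrable (fun w : ℝ => Real.exp (-w^2/4)) := by
    refine (integrable_exp_neg_mul_sq (by norm_num : (0:ℝ) < 1/4)).congr ?_
    filter_upwards with x; ring_nf
  have g2 : Integrable (fun w : ℝ => Real.exp (-|w|/4)) := by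
    have h1 : IntegrableOn (fun w : ℝ => Real.exp (-|w|/4)) (Ioi 0) := by
      refine (exp_neg_integrableOn_Ioi 0 (by norm_num : (0:ℝ) < 1/4)).congr_fun ?_
        measurableSet_Ioi
      intro x hx; simp only [mem_Ioi] at hx; dsimp only; rw [abs_of_pos hx]; ring_nf
    have h2 : IntegrableOn (fun w : ℝ => Real.exp (-|w|/4)) (Iic 0) := by
      have A : MeasurableEmbedding (fun x : ℝ => -x) :=
        (Homeomorph.neg ℝ).isClosedEmbedding.measurableEmbedding
      have key := ((Measure.measurePreserving_neg (volume : Measure ℝ)).integrableOn_comp_preimage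
        A (f := fun w : ℝ => Real.exp (-|w|/4)) (s := Iic 0))
      have pre : (fun x : ℝ => -x) ⁻¹' (Iic 0) = Ici 0 := by ext x; simp
      rw [pre] at key
      refine key.mp ?_
      have e : ((fun w : ℝ => Real.exp (-|w|/4)) ∘ fun x : ℝ => -x)
          = fun w : ℝ => Real.exp (-|w|/4) := by funext x; simp [abs_neg]
      rw [e]
      exact (integrableOn_Ici_iff_integrableOn_Ioi).mpr h1
    have h3 := h2.union h1
    rw [Iic_union_Ioi] at h3
    exact integrableOn_univ.mp h3
  exact (g1.const_mul 4).add (g2.const_mul 2)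

lemma lapf_meas (τ : ℝ) :
    AEStronglyMeasurable (fun w => indicator (Ioi (-Real.sqrt τ))
      (fun w => lapf τ (1 + w / Real.sqrt τ)) w) volume := by
  refine (Measurable.indicator ?_ measurableSet_Ioi).aestronglyMeasurable
  unfold lapf
  fun_prop

def contw (w v : ℝ) : ℝ := (1/(1+v)) * Real.exp (-(w^2*(2*(1+v)+1)/(2*(1+v)^2)))

lemma lapf_eq {τ w : ℝ} (hτ : 0 < τ) (hw : -Real.sqrt τ < w) :
    lapf τ (1 + w / Real.sqrt τ) = contw w (w / Real.sqrt τ) := by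
  have hs : 0 < Real.sqrt τ := Real.sqrt_pos.2 hτ
  have hv : -1 < w / Real.sqrt τ := by rw [lt_div_iff₀ hs]; linarith
  have hu : (0:ℝ) < 1 + w / Real.sqrt τ := by linarith
  have key : τ * (1 + w / Real.sqrt τ - 1)^2 = w^2 := by
    rw [add_sub_cancel_left, div_pow, Real.sq_sqrt hτ.le]
    field_simp
  rw [lapf, contw, phi_shift τ _ hu.ne', key]

lemma re_bound {r : ℝ} (hr : 0 ≤ r) : r * Real.exp (-(r^2)) ≤ 1 := by
  have h1 : r ≤ r^2 + 1 := by nlinarith [sq_nonneg (r-1)]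
  have h2 := Real.add_one_le_exp (r^2)
  have h : r ≤ Real.exp (r^2) := by linarith
  calc r * Real.exp (-(r^2)) ≤ Real.exp (r^2) * Real.exp (-(r^2)) :=
        mul_le_mul_of_nonneg_right h (Real.exp_pos _).le
    _ = 1 := by rw [← Real.exp_add]; simp

lemma prefac_bound {u : ℝ} (hu : 0 < u) : (1/u) * Real.exp (-(1/(16*u^2))) ≤ 4 := by
  have e : (1:ℝ)/(16*u^2) = (1/(4*u))^2 := by field_simp; ring
  calc (1/u) * Real.exp (-(1/(16*u^2)))
      = 4 * ((1/(4*u)) * Real.exp (-((1/(4*u))^2))) := by rw [← e]; ring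
    _ ≤ 4 * 1 := by
        have := re_bound (r := 1/(4*u)) (by positivity)
        linarith
    _ = 4 := mul_one 4

lemma lapf_bound {τ : ℝ} (hτ : 1 ≤ τ) (w : ℝ) :
    ‖indicator (Ioi (-Real.sqrt τ)) (fun w => lapf τ (1 + w / Real.sqrt τ)) w‖ ≤ lapBound w := by
  have hτ0 : (0:ℝ) < τ := lt_of_lt_of_le one_pos hτ
  by_cases hmem : w ∈ Ioi (-Real.sqrt τ)
  swap
  · rw [indicator_of_notMem hmem, norm_zero, lapBound]
    positivity
  rw [indicator_of_mem hmem, lapf_eq hτ0 hmem]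
  have hs : 0 < Real.sqrt τ := Real.sqrt_pos.2 hτ0
  have hs1 : 1 ≤ Real.sqrt τ := by
    rw [show (1:ℝ) = Real.sqrt 1 by simp]
    exact Real.sqrt_le_sqrt hτ
  set v := w / Real.sqrt τ with hv_def
  have hv1 : -1 < v := by
    rw [hv_def, lt_div_iff₀ hs]
    have := mem_Ioi.1 hmem; linarith
  have hu : (0:ℝ) < 1 + v := by linarith
  have hwv : w = v * Real.sqrt τ := (div_mul_cancel₀ w hs.ne').symm
  have hw2 : w^2 = τ * v^2 := by rw [hwv, mul_pow, Real.sq_sqrt hτ0.le]; ring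
  clear_value v
  have hune : (1:ℝ) + v ≠ 0 := ne_of_gt hu
  rw [contw, lapBound, Real.norm_eq_abs,
    abs_of_pos (mul_pos (one_div_pos.2 hu) (Real.exp_pos _))]
  set E := w^2*(2*(1+v)+1)/(2*(1+v)^2) with hE_def
  clear_value E
  have hgauss : (0:ℝ) < Real.exp (-w^2/4) := Real.exp_pos _
  have habs : (0:ℝ) < Real.exp (-|w|/4) := Real.exp_pos _
  rcases le_or_gt (1+v) (1/2) with hc | hc
  · -- small u : u ∈ (0,1/2]
    have hvsq : (1:ℝ)/4 ≤ v^2 := by nlinarith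
    have hw2' : (1:ℝ)/4 ≤ w^2 := by nlinarith
    have hratio1 : (2:ℝ) ≤ (2*(1+v)+1)/(2*(1+v)^2) := by
      rw [le_div_iff₀ (by positivity)]; nlinarith
    have hEa : 2*w^2 ≤ E := by
      rw [hE_def, mul_div_assoc]
      calc 2*w^2 = w^2 * 2 := by ring
        _ ≤ w^2 * ((2*(1+v)+1)/(2*(1+v)^2)) :=
            mul_le_mul_of_nonneg_left hratio1 (sq_nonneg w)
    have hEb : 1/(8*(1+v)^2) ≤ E := by
      rw [hE_def, mul_div_assoc]
      calc 1/(8*(1+v)^2) = (1/4) * (1/(2*(1+v)^2)) := by field_simp; ring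
        _ ≤ w^2 * (1/(2*(1+v)^2)) :=
            mul_le_mul_of_nonneg_right hw2' (by positivity)
        _ ≤ w^2 * ((2*(1+v)+1)/(2*(1+v)^2)) := by
            apply mul_le_mul_of_nonneg_left ?_ (sq_nonneg w)
            rw [div_le_div_iff₀ (by positivity) (by positivity)]
            nlinarith
    have hE1 : w^2 + 1/(16*(1+v)^2) ≤ E := by
      have e2 : 1/(8*(1+v)^2) = 2 * (1/(16*(1+v)^2)) := by field_simp; ring
      linarith
    calc (1/(1+v)) * Real.exp (-E)
        ≤ (1/(1+v)) * Real.exp (-(w^2 + 1/(16*(1+v)^2))) :=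
          mul_le_mul_of_nonneg_left (Real.exp_le_exp.mpr (by linarith)) (by positivity)
      _ = ((1/(1+v)) * Real.exp (-(1/(16*(1+v)^2)))) * Real.exp (-w^2) := by
          rw [mul_assoc, ← Real.exp_add]; ring_nf
      _ ≤ 4 * Real.exp (-w^2) := by
          apply mul_le_mul_of_nonneg_right (prefac_bound hu) (Real.exp_pos _).le
      _ ≤ 4 * Real.exp (-w^2/4) := by
          apply mul_le_mul_of_nonneg_left (Real.exp_le_exp.mpr (by nlinarith [sq_nonneg w])) (by norm_num)
      _ ≤ 4 * Real.exp (-w^2/4) + 2 * Real.exp (-|w|/4) := by linarith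
  · rcases le_or_gt (1+v) 2 with hc2 | hc2
    · -- middle u ∈ (1/2, 2]
      have hE : w^2/4 ≤ E := by
        rw [hE_def, mul_div_assoc]
        calc w^2/4 = w^2 * (1/4) := by ring
          _ ≤ w^2 * ((2*(1+v)+1)/(2*(1+v)^2)) := by
              apply mul_le_mul_of_nonneg_left ?_ (sq_nonneg w)
              rw [le_div_iff₀ (by positivity)]; nlinarith
      have hpre : 1/(1+v) ≤ 2 := by
        rw [div_le_iff₀ hu]; linarith
      calc (1/(1+v)) * Real.exp (-E)
          ≤ 2 * Real.exp (-(w^2/4)) := by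
            apply mul_le_mul hpre (Real.exp_le_exp.mpr (by linarith)) (Real.exp_pos _).le (by norm_num)
        _ ≤ 4 * Real.exp (-w^2/4) + 2 * Real.exp (-|w|/4) := by
            rw [show -(w^2/4) = -w^2/4 by ring]; linarith
    · -- large u : u > 2, v > 1, w > 0
      have hv2 : (1:ℝ) < v := by linarith
      have hw0 : 0 < w := by rw [hwv]; positivity
      have hE2 : v/4 ≤ v^2*(2*(1+v)+1)/(2*(1+v)^2) := by
        rw [div_le_div_iff₀ (by norm_num) (by positivity)]
        nlinarith
      have hEeq : E = τ * (v^2*(2*(1+v)+1)/(2*(1+v)^2)) := by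
        rw [hE_def, hw2]; ring
      have hE : w/4 ≤ E := by
        rw [hEeq]
        calc w/4 = Real.sqrt τ * (v/4) := by rw [hwv]; ring
          _ ≤ τ * (v/4) := by
              apply mul_le_mul_of_nonneg_right ?_ (by linarith)
              nlinarith [Real.sq_sqrt hτ0.le]
          _ ≤ τ * (v^2*(2*(1+v)+1)/(2*(1+v)^2)) :=
              mul_le_mul_of_nonneg_left hE2 hτ0.le
      have hpre : 1/(1+v) ≤ 2 := by
        rw [div_le_iff₀ hu]; linarith
      calc (1/(1+v)) * Real.exp (-E)
          ≤ 2 * Real.exp (-(w/4)) := by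
            apply mul_le_mul hpre (Real.exp_le_exp.mpr (by linarith)) (Real.exp_pos _).le (by norm_num)
        _ = 2 * Real.exp (-|w|/4) := by rw [abs_of_pos hw0]; ring_nf
        _ ≤ 4 * Real.exp (-w^2/4) + 2 * Real.exp (-|w|/4) := by linarith

lemma lapf_lim (w : ℝ) :
    Tendsto (fun τ => indicator (Ioi (-Real.sqrt τ))
        (fun w => lapf τ (1 + w / Real.sqrt τ)) w) atTop
      (nhds (Real.exp (-(3/2) * w^2))) := by
  have hv : Tendsto (fun τ : ℝ => w / Real.sqrt τ) atTop (nhds 0) :=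
    tendsto_const_nhds.div_atTop sqrt_tendsto_atTop
  have hc : ContinuousAt (contw w) 0 := by
    unfold contw
    apply ContinuousAt.mul
    · exact ContinuousAt.div continuousAt_const (by fun_prop) (by norm_num)
    · exact (Real.continuous_exp.continuousAt).comp
        (ContinuousAt.neg (ContinuousAt.div (by fun_prop) (by fun_prop) (by norm_num)))
  have hco := hc.tendsto.comp hv
  have c0 : contw w 0 = Real.exp (-(3/2) * w^2) := by
    rw [contw]; norm_num
    congr 1; ring
  rw [c0] at hco
  refine Tendsto.congr' ?_ hco
  filter_upwards [eventually_gt_atTop (w^2)] with τ hτ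
  have habs : |w| < Real.sqrt τ := by
    rw [← Real.sqrt_sq_eq_abs]
    exact Real.sqrt_lt_sqrt (sq_nonneg w) hτ
  have hτ0 : 0 < τ := lt_of_le_of_lt (sq_nonneg w) hτ
  have hmem : w ∈ Ioi (-Real.sqrt τ) := by
    simp only [mem_Ioi]
    have := neg_abs_le w
    linarith
  simp only [Function.comp_apply]
  rw [indicator_of_mem hmem, lapf_eq hτ0 hmem]

lemma lap_core : Tendsto (fun τ => Real.sqrt τ * Real.exp (3*τ/2) * lapG τ) atTop
    (nhds (Real.sqrt (2*π/3))) := by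
  have h := tendsto_integral_filter_of_dominated_convergence (μ := volume)
    (F := fun τ w => indicator (Ioi (-Real.sqrt τ)) (fun w => lapf τ (1 + w / Real.sqrt τ)) w)
    (f := fun w => Real.exp (-(3/2) * w^2)) lapBound
    (Eventually.of_forall fun τ => lapf_meas τ)
    (by filter_upwards [eventually_ge_atTop (1:ℝ)] with τ hτ
        exact Eventually.of_forall fun w => lapf_bound hτ w)
    lapBound_integrable
    (Eventually.of_forall fun w => lapf_lim w)
  have e : (∫ w : ℝ, Real.exp (-(3/2) * w^2)) = Real.sqrt (2*π/3) := by
    rw [integral_gaussian, show π/(3/2:ℝ) = 2*π/3 by ring]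
  rw [e] at h
  refine Tendsto.congr' ?_ h
  filter_upwards [eventually_gt_atTop (0:ℝ)] with τ hτ
  exact (lapG_eq hτ).symm

lemma subst1 {lD t : ℝ} (hl : 0 < lD) (ht : 0 < t) :
    (∫ x in Ioi (0:ℝ), (1/x) * Real.exp (-(π^2*t)/(2*x^2) - lD*x))
      = lapG (lD * (π^2*t/lD) ^ ((1:ℝ)/3)) := by
  set s := (π^2*t/lD) ^ ((1:ℝ)/3) with hs_def
  have hbase : (0:ℝ) < π^2*t/lD := by positivity
  have hs : 0 < s := Real.rpow_pos_of_pos hbase _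
  have hs3 : lD * s^3 = π^2*t := by
    rw [hs_def, ← Real.rpow_natCast ((π^2*t/lD) ^ ((1:ℝ)/3)) 3, ← Real.rpow_mul hbase.le]
    norm_num
    field_simp
  have key := integral_comp_mul_left_Ioi
    (fun x => (1/x) * Real.exp (-(π^2*t)/(2*x^2) - lD*x)) 0 hs
  simp only [mul_zero, smul_eq_mul] at key
  have key2 : (∫ x in Ioi (0:ℝ), (1/x) * Real.exp (-(π^2*t)/(2*x^2) - lD*x))
      = s * ∫ u in Ioi (0:ℝ), (1/(s*u)) * Real.exp (-(π^2*t)/(2*(s*u)^2) - lD*(s*u)) := by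
    rw [key, ← mul_assoc, mul_inv_cancel₀ hs.ne', one_mul]
  rw [key2, lapG, ← integral_const_mul]
  refine setIntegral_congr_fun measurableSet_Ioi (fun u hu => ?_)
  have hu : 0 < u := hu
  have e1 : s * ((1/(s*u)) * Real.exp (-(π^2*t)/(2*(s*u)^2) - lD*(s*u)))
      = (1/u) * Real.exp (-(π^2*t)/(2*(s*u)^2) - lD*(s*u)) := by
    field_simp
  rw [e1]
  rw [← hs3]
  congr 1
  field_simp
  ring

lemma tau_eq {lD t : ℝ} (hl : 0 < lD) (ht : 0 < t) :
    lD * (π^2*t/lD) ^ ((1:ℝ)/3) = π^((2:ℝ)/3) * lD^((2:ℝ)/3) * t^((1:ℝ)/3) := by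
  rw [div_rpow (by positivity) hl.le, mul_rpow (by positivity) ht.le,
    ← Real.rpow_natCast π 2, ← Real.rpow_mul Real.pi_pos.le]
  norm_num
  have h1 : lD^((2:ℝ)/3) * lD^((1:ℝ)/3) = lD := by
    rw [← Real.rpow_add hl]; norm_num
  field_simp [ne_of_gt (Real.rpow_pos_of_pos hl ((1:ℝ)/3))]
  rw [mul_comm]; exact h1.symm

lemma sqrt_tau_eq {lD t : ℝ} (hl : 0 < lD) (ht : 0 < t) :
    Real.sqrt (π^((2:ℝ)/3) * lD^((2:ℝ)/3) * t^((1:ℝ)/3))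
      = π^((1:ℝ)/3) * lD^((1:ℝ)/3) * t^((1:ℝ)/6) := by
  rw [Real.sqrt_eq_rpow,
    mul_rpow (by positivity) (Real.rpow_nonneg ht.le _),
    mul_rpow (by positivity) (Real.rpow_nonneg hl.le _),
    ← Real.rpow_mul Real.pi_pos.le, ← Real.rpow_mul hl.le, ← Real.rpow_mul ht.le]
  norm_num

/-- For `λ_D > 0`, as `t → ∞`, `∫₀^∞ (1/x) exp(-π²t/(2x²) - λ_D x) dx` is asymptotic to
`C₀ t^{-1/6} exp(-(3/2)π^{2/3}λ_D^{2/3}t^{1/3})` for some constant `C₀ > 0`. -/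
theorem laplace_asymptotic_inv_x (lD : ℝ) (hl : 0 < lD) :
    ∃ C₀ > (0:ℝ),
      Tendsto (fun t : ℝ =>
          (∫ x in Set.Ioi (0:ℝ), (1 / x) * Real.exp (-(π ^ 2 * t) / (2 * x ^ 2) - lD * x)) /
            (C₀ * t ^ (-(1:ℝ)/6) *
              Real.exp (-(3/2) * π ^ ((2:ℝ)/3) * lD ^ ((2:ℝ)/3) * t ^ ((1:ℝ)/3))))
        atTop (nhds 1) := by
  have hL : 0 < Real.sqrt (2*π/3) := Real.sqrt_pos.2 (by positivity)
  refine ⟨Real.sqrt (2*π/3) * (π^((1:ℝ)/3) * lD^((1:ℝ)/3))⁻¹, by positivity, ?_⟩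
  have hcomp : Tendsto (fun t : ℝ => lD * (π^2*t/lD) ^ ((1:ℝ)/3)) atTop atTop := by
    apply Tendsto.const_mul_atTop hl
    apply (tendsto_rpow_atTop (by norm_num : (0:ℝ) < 1/3)).comp
    apply Tendsto.atTop_div_const hl
    exact Tendsto.const_mul_atTop (by positivity) tendsto_id
  have main := (lap_core.comp hcomp).div_const (Real.sqrt (2*π/3))
  rw [div_self hL.ne'] at main
  refine Tendsto.congr' ?_ main
  filter_upwards [eventually_gt_atTop (0:ℝ)] with t ht
  simp only [Function.comp_apply]
  set τ := lD * (π^2*t/lD) ^ ((1:ℝ)/3) with hτ_def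
  have hτpos : 0 < τ := mul_pos hl (Real.rpow_pos_of_pos (by positivity) _)
  have hτ_eq : τ = π^((2:ℝ)/3) * lD^((2:ℝ)/3) * t^((1:ℝ)/3) := tau_eq hl ht
  have hsq : Real.sqrt τ = π^((1:ℝ)/3) * lD^((1:ℝ)/3) * t^((1:ℝ)/6) := by
    rw [hτ_eq]; exact sqrt_tau_eq hl ht
  have hsqpos : 0 < Real.sqrt τ := Real.sqrt_pos.2 hτpos
  have hF : (∫ x in Set.Ioi (0:ℝ), (1 / x) * Real.exp (-(π ^ 2 * t) / (2 * x ^ 2) - lD * x))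
      = lapG τ := subst1 hl ht
  have hX : -(3/2) * π^((2:ℝ)/3) * lD^((2:ℝ)/3) * t^((1:ℝ)/3) = -(3*τ/2) := by
    rw [hτ_eq]; ring
  have hden : Real.sqrt (2*π/3) * (π^((1:ℝ)/3) * lD^((1:ℝ)/3))⁻¹ * t ^ (-(1:ℝ)/6)
      = Real.sqrt (2*π/3) * (Real.sqrt τ)⁻¹ := by
    rw [hsq, show (-(1:ℝ)/6) = -((1:ℝ)/6) by norm_num, Real.rpow_neg ht.le]
    rw [mul_inv, mul_inv]
    ring
  rw [hF, hX, hden, Real.exp_neg]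
  rw [eq_div_iff (by positivity)]
  field_simp
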